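/- The Taylor expansion map T₁ : Habiro ring → ℤ[[1-q]] at q = 1 is injective. -/

import Mathlib

open Polynomial

/-- The ideal of `ℤ[q]` generated by `(1-q)(1-q²)⋯(1-qⁿ)`. -/
noncomputable def habiroIdeal (n : ℕ) : Ideal (Polynomial ℤ) :=
  Ideal.span {∏ j ∈ Finset.Icc 1 n, (1 - X ^ j)}

lemma habiroIdeal_antitone {m n : ℕ} (h : m ≤ n) : habiroIdeal n ≤ habiroIdeal m := by
  rw [habiroIdeal, habiroIdeal, Ideal.span_singleton_le_span_singleton]
  exact Finset.prod_dvd_prod_of_subset _ _ _ (Finset.Icc_subset_Icc le_rfl h)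

/-- The transition maps of the inverse system. -/
noncomputable def habiroTrans {m n : ℕ} (h : m ≤ n) :
    Polynomial ℤ ⧸ habiroIdeal n →+* Polynomial ℤ ⧸ habiroIdeal m :=
  Ideal.Quotient.factor (habiroIdeal_antitone h)

/-- The Habiro ring: the inverse limit of `ℤ[q]/((1-q)⋯(1-qⁿ))`, realized as the
subring of compatible families in the product ring. -/
noncomputable def HabiroRing : Subring (∀ n, Polynomial ℤ ⧸ habiroIdeal n) :=
  ⨅ (m : ℕ), ⨅ (n : ℕ), ⨅ (h : m ≤ n),
    RingHom.eqLocus ((habiroTrans h).comp (Pi.evalRingHom _ n)) (Pi.evalRingHom _ m)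

/-- The natural map `ℤ[q] → HabiroRing`. -/
noncomputable def habiroOfPoly : Polynomial ℤ →+* HabiroRing :=
  (Pi.ringHom fun n => Ideal.Quotient.mk (habiroIdeal n)).codRestrict _ (by
    intro p
    simp only [HabiroRing, Subring.mem_iInf]
    intro m n h
    rfl)

lemma habiroIdeal_le_pow (n : ℕ) :
    habiroIdeal n ≤ Ideal.span {((1 : Polynomial ℤ) - X) ^ n} := by
  rw [habiroIdeal, Ideal.span_singleton_le_span_singleton]
  calc ((1 : Polynomial ℤ) - X) ^ n = ∏ _j ∈ Finset.Icc 1 n, ((1 : Polynomial ℤ) - X) := by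
        rw [Finset.prod_const, Nat.card_Icc]; norm_num
    _ ∣ ∏ j ∈ Finset.Icc 1 n, ((1 : Polynomial ℤ) - X ^ j) := by
        refine Finset.prod_dvd_prod_of_dvd _ _ fun j _ => ?_
        simpa using one_sub_dvd_one_sub_pow (X : Polynomial ℤ) j


namespace HabiroAux

/-- The product `(1-q)(1-q²)⋯(1-qᵐ)`. -/
noncomputable def F (m : ℕ) : Polynomial ℤ := ∏ j ∈ Finset.Icc 1 m, (1 - X ^ j)

lemma int_eq_zero_of_forall_pow_dvd {ℓ : ℕ} (hl : 2 ≤ ℓ) {z : ℤ}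
    (h : ∀ N : ℕ, (ℓ : ℤ) ^ N ∣ z) : z = 0 := by
  by_contra hz
  have h1 : (ℓ : ℤ) ^ z.natAbs ∣ z := h _
  have h2 : ℓ ^ z.natAbs ∣ z.natAbs := by
    have := Int.natAbs_dvd_natAbs.mpr h1
    simpa [Int.natAbs_pow] using this
  have h3 : ℓ ^ z.natAbs ≤ z.natAbs :=
    Nat.le_of_dvd (Int.natAbs_pos.mpr hz) h2
  have h4 : z.natAbs < 2 ^ z.natAbs := Nat.lt_two_pow_self
  have h5 : 2 ^ z.natAbs ≤ ℓ ^ z.natAbs := Nat.pow_le_pow_left hl _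
  omega

lemma C_mul_modByMonic {g : Polynomial ℤ} (hg : g.Monic) (a : ℤ) (p : Polynomial ℤ) :
    (C a * p) %ₘ g = C a * (p %ₘ g) := by
  have h := div_modByMonic_unique (f := C a * p) (g := g) (C a * (p /ₘ g)) (C a * (p %ₘ g)) hg
    ⟨by rw [← mul_assoc, mul_comm g (C a), mul_assoc, ← mul_add, modByMonic_add_div p g], ?_⟩
  · exact h.2
  · calc degree (C a * (p %ₘ g)) ≤ degree (C a) + degree (p %ₘ g) := degree_mul_le _ _
      _ ≤ 0 + degree (p %ₘ g) := by gcongr; exact degree_C_le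
      _ = degree (p %ₘ g) := zero_add _
      _ < degree g := degree_modByMonic_lt _ hg

/-- If `g` is monic and `g ∣ p - C a * β`, all coefficients of `p %ₘ g` are divisible by `a`. -/
lemma dvd_coeff_modByMonic {g p β : Polynomial ℤ} (hg : g.Monic) (a : ℤ)
    (h : g ∣ p - C a * β) (i : ℕ) : a ∣ (p %ₘ g).coeff i := by
  obtain ⟨γ, hγ⟩ := h
  have hp : p = C a * β + g * γ := by linear_combination hγ
  have h1 : p %ₘ g = (C a * β) %ₘ g := by
    have h2 := div_modByMonic_unique (f := p) (g := g) (γ + (C a * β) /ₘ g)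
      ((C a * β) %ₘ g) hg ⟨?_, degree_modByMonic_lt _ hg⟩
    · exact h2.2
    · rw [hp, mul_add]
      have := modByMonic_add_div (C a * β) g
      linear_combination this
  rw [h1, C_mul_modByMonic hg, coeff_C_mul]
  exact Dvd.intro _ rfl

lemma cyclo_dvd_one_sub_X_pow {d j : ℕ} (hd : 0 < d) (hdj : d ∣ j) :
    cyclotomic d ℤ ∣ 1 - X ^ j := by
  obtain ⟨k, rfl⟩ := hdj
  have h1 : cyclotomic d ℤ ∣ X ^ d - 1 := cyclotomic.dvd_X_pow_sub_one d ℤ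
  have h2 : (X : Polynomial ℤ) ^ d - 1 ∣ X ^ (d * k) - 1 := by
    have := sub_dvd_pow_sub_pow ((X : Polynomial ℤ) ^ d) 1 k
    simpa [← pow_mul] using this
  have h3 : cyclotomic d ℤ ∣ X ^ (d * k) - 1 := h1.trans h2
  have : (1 : Polynomial ℤ) - X ^ (d * k) = -(X ^ (d * k) - 1) := by ring
  rw [this]
  exact h3.neg_right

lemma cycloPow_dvd_F {d s m : ℕ} (hd : 0 < d) (hm : d * s ≤ m) :
    cyclotomic d ℤ ^ s ∣ F m := by
  classical
  set T := (Finset.Icc 1 m).filter (fun j => d ∣ j) with hT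
  have hcard : T.card = m / d := by
    rw [hT, show Finset.Icc 1 m = Finset.Ioc 0 m from Finset.Icc_add_one_left_eq_Ioc 0 m]
    exact Nat.Ioc_filter_dvd_card_eq_div m d
  have hsle : s ≤ m / d := (Nat.le_div_iff_mul_le hd).mpr (by rwa [Nat.mul_comm] at hm)
  have h1 : cyclotomic d ℤ ^ s ∣ cyclotomic d ℤ ^ T.card := by
    rw [hcard]; exact pow_dvd_pow _ hsle
  have h2 : cyclotomic d ℤ ^ T.card ∣ ∏ j ∈ T, (1 - X ^ j) := by
    rw [← Finset.prod_const]
    exact Finset.prod_dvd_prod_of_dvd _ _ fun j hj =>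
      cyclo_dvd_one_sub_X_pow hd (Finset.mem_filter.mp hj).2
  have h3 : ∏ j ∈ T, (1 - (X : Polynomial ℤ) ^ j) ∣ F m :=
    Finset.prod_dvd_prod_of_subset _ _ _ (Finset.filter_subset _ _)
  exact h1.trans (h2.trans h3)

lemma cyclo_dvd_expand {ℓ e : ℕ} (hp : ℓ.Prime) (hle : ¬ ℓ ∣ e) :
    ∀ c, 0 < c → cyclotomic (e * ℓ ^ c) ℤ ∣ expand ℤ (ℓ ^ c) (cyclotomic e ℤ) := by
  intro c
  induction c with
  | zero => omega
  | succ c ih =>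
    intro _
    rcases Nat.eq_zero_or_pos c with rfl | hc
    · rw [pow_one, cyclotomic_expand_eq_cyclotomic_mul hp hle]
      exact Dvd.intro _ rfl
    · have h1 : expand ℤ (ℓ ^ (c + 1)) (cyclotomic e ℤ)
          = expand ℤ ℓ (expand ℤ (ℓ ^ c) (cyclotomic e ℤ)) := by
        rw [expand_expand, pow_succ']
      have h2 : cyclotomic (e * ℓ ^ (c + 1)) ℤ
          = expand ℤ ℓ (cyclotomic (e * ℓ ^ c) ℤ) := by
        rw [cyclotomic_expand_eq_cyclotomic hp ⟨e * ℓ ^ (c - 1), by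
          rcases c with _ | c'
          · omega
          · simp [pow_succ]; ring⟩]
        congr 1
        rw [mul_assoc, ← pow_succ]
      rw [h1, h2]
      exact _root_.map_dvd (expand ℤ ℓ) (ih hc)

lemma C_dvd_cycloPow_sub_expand {ℓ : ℕ} (hp : ℓ.Prime) (c e : ℕ) :
    (C (ℓ : ℤ)) ∣ cyclotomic e ℤ ^ (ℓ ^ c) - expand ℤ (ℓ ^ c) (cyclotomic e ℤ) := by
  haveI : Fact ℓ.Prime := ⟨hp⟩
  rw [C_dvd_iff_dvd_coeff]
  intro i
  have hmap : Polynomial.map (Int.castRingHom (ZMod ℓ))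
      (cyclotomic e ℤ ^ (ℓ ^ c) - expand ℤ (ℓ ^ c) (cyclotomic e ℤ)) = 0 := by
    have h1 : expand (ZMod ℓ) (ℓ ^ c) (cyclotomic e (ZMod ℓ))
        = cyclotomic e (ZMod ℓ) ^ (ℓ ^ c) := by
      have h := Polynomial.map_iterateFrobenius_expand (R := ZMod ℓ) (p := ℓ)
        (cyclotomic e (ZMod ℓ)) c
      rwa [show iterateFrobenius (ZMod ℓ) ℓ c = RingHom.id _ from
        RingHom.ext fun x => by rw [iterateFrobenius_def, ZMod.pow_card_pow]; rfl,
        Polynomial.map_id] at h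
    rw [Polynomial.map_sub, Polynomial.map_pow, map_cyclotomic, map_expand,
      map_cyclotomic, h1, sub_self]
  have := congrArg (fun q => Polynomial.coeff q i) hmap
  simp only [Polynomial.coeff_map, Polynomial.coeff_zero] at this
  exact (ZMod.intCast_zmod_eq_zero_iff_dvd _ ℓ).mp this

/-- The key statement: `Φ_d^s` divides `r m` whenever `d*s ≤ m`. -/
theorem keyDvd (r : ℕ → Polynomial ℤ)
    (hcom : ∀ {m n : ℕ}, m ≤ n → F m ∣ r n - r m)
    (hdvd : ∀ n, (1 - X) ^ n ∣ r n) :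
    ∀ d, 0 < d → ∀ s m, d * s ≤ m → cyclotomic d ℤ ^ s ∣ r m := by
  intro d
  induction d using Nat.strong_induction_on with
  | _ d IH =>
  intro hd s m hm
  rcases Nat.lt_or_ge d 2 with hd2 | hd2
  · -- d = 1
    have hd1 : d = 1 := by omega
    subst hd1
    rw [cyclotomic_one]
    have h1 : ((X : Polynomial ℤ) - 1) ^ s ∣ (1 - X) ^ s := by
      apply pow_dvd_pow_of_dvd
      exact ⟨-1, by ring⟩
    have h2 : ((1 : Polynomial ℤ) - X) ^ s ∣ (1 - X) ^ m :=
      pow_dvd_pow _ (by omega)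
    exact h1.trans (h2.trans (hdvd m))
  -- d ≥ 2
  have hd0 : d ≠ 0 := by omega
  have hd1 : d ≠ 1 := by omega
  set ℓ := d.minFac with hℓdef
  have hp : ℓ.Prime := Nat.minFac_prime hd1
  set c := d.factorization ℓ with hcdef
  set e := d / ℓ ^ c with hedef
  have hc : 0 < c := hp.factorization_pos_of_dvd hd0 (Nat.minFac_dvd d)
  have hde : ℓ ^ c * e = d := Nat.ordProj_mul_ordCompl_eq_self d ℓ
  have hle : ¬ ℓ ∣ e := Nat.not_dvd_ordCompl hp hd0
  have he0 : 0 < e := Nat.ordCompl_pos ℓ hd0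
  have hed : e < d := by
    have h2 : 2 ≤ ℓ ^ c := le_trans hp.two_le (Nat.le_self_pow hc.ne' ℓ)
    calc e < 2 * e := by omega
      _ ≤ ℓ ^ c * e := Nat.mul_le_mul_right e h2
      _ = d := hde
  rcases Nat.eq_zero_or_pos s with rfl | hs
  · simp
  set Φ := cyclotomic d ℤ with hΦdef
  set g := Φ ^ s with hgdef
  have hgM : g.Monic := (cyclotomic.monic d ℤ).pow s
  set A := expand ℤ (ℓ ^ c) (cyclotomic e ℤ) with hAdef
  have hA1 : Φ ∣ A := by
    have := cyclo_dvd_expand hp hle c hc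
    rwa [show e * ℓ ^ c = d by rw [mul_comm]; exact hde] at this
  have hA2 : (C (ℓ : ℤ)) ∣ cyclotomic e ℤ ^ (ℓ ^ c) - A := C_dvd_cycloPow_sub_expand hp c e
  -- key decomposition for each j with s ≤ ℓ^j
  have key' : ∀ j : ℕ, s ≤ ℓ ^ j → ∃ β, g ∣ r m - C ((ℓ : ℤ) ^ (j + 1)) * β := by
    intro j hsj
    set M := max m (e * ℓ ^ (c + j)) with hMdef
    obtain ⟨w, hw⟩ : cyclotomic e ℤ ^ (ℓ ^ (c + j)) ∣ r M :=
      IH e hed he0 (ℓ ^ (c + j)) M (le_max_right _ _)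
    have hδ' : ((ℓ : Polynomial ℤ)) ∣ cyclotomic e ℤ ^ (ℓ ^ c) - A := by
      rwa [Polynomial.C_eq_natCast] at hA2
    have hδ2 := dvd_sub_pow_of_dvd_sub hδ' j
    obtain ⟨δ, hδ⟩ : (C ((ℓ : ℤ) ^ (j + 1)))
        ∣ (cyclotomic e ℤ ^ (ℓ ^ c)) ^ (ℓ ^ j) - A ^ (ℓ ^ j) := by
      have : (C ((ℓ : ℤ) ^ (j + 1))) = ((ℓ : ℕ) ^ (j + 1) : Polynomial ℤ) := by
        push_cast [Polynomial.C_eq_natCast]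
        norm_cast
      rw [this]
      exact_mod_cast hδ2
    obtain ⟨A₀, hA₀⟩ : Φ ^ (ℓ ^ j) ∣ A ^ (ℓ ^ j) := pow_dvd_pow_of_dvd hA1 _
    obtain ⟨t, ht⟩ : F m ∣ r M - r m := hcom (le_max_left _ _)
    obtain ⟨u, hu⟩ : g ∣ F m := cycloPow_dvd_F (by omega) hm
    refine ⟨δ * w, ?_⟩
    have hrM : r M = Φ ^ (ℓ ^ j) * (A₀ * w) + C ((ℓ : ℤ) ^ (j + 1)) * (δ * w) := by
      have h1 : r M = (cyclotomic e ℤ ^ (ℓ ^ c)) ^ (ℓ ^ j) * w := by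
        rw [← pow_mul, ← pow_add]; exact hw
      rw [h1]
      have h2 : (cyclotomic e ℤ ^ (ℓ ^ c)) ^ (ℓ ^ j)
          = A ^ (ℓ ^ j) + C ((ℓ : ℤ) ^ (j + 1)) * δ := by linear_combination hδ
      rw [h2, hA₀]; ring
    have heq : r m - C ((ℓ : ℤ) ^ (j + 1)) * (δ * w)
        = Φ ^ (ℓ ^ j) * (A₀ * w) - g * (u * t) := by
      have hmm : r m = r M - F m * t := by linear_combination -ht
      rw [hmm, hrM, hu]; ring
    rw [heq]
    refine dvd_sub (Dvd.dvd.mul_right ?_ _) (Dvd.intro _ rfl)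
    exact pow_dvd_pow Φ hsj
  -- conclude via coefficients of r m %ₘ g
  have hmod : r m %ₘ g = 0 := by
    apply Polynomial.ext
    intro i
    rw [Polynomial.coeff_zero]
    apply int_eq_zero_of_forall_pow_dvd hp.two_le
    intro N
    have hjs : s ≤ ℓ ^ (max s N) := by
      have h1 : max s N < 2 ^ (max s N) := Nat.lt_two_pow_self
      have h2 : 2 ^ (max s N) ≤ ℓ ^ (max s N) := Nat.pow_le_pow_left hp.two_le _
      have := le_max_left s N
      omega
    obtain ⟨β, hβ⟩ := key' (max s N) hjs
    have hdvdc := dvd_coeff_modByMonic hgM _ hβ i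
    exact dvd_trans (pow_dvd_pow (ℓ : ℤ) (by omega : N ≤ max s N + 1)) hdvdc
  exact (modByMonic_eq_zero_iff_dvd hgM).mp hmod

/-- Assembling prime powers of distinct cyclotomics. -/
lemma prod_cycloPow_dvd (s : Finset ℕ) (hs : ∀ d ∈ s, 0 < d) (ν : ℕ → ℕ)
    (R : Polynomial ℤ) (h : ∀ d ∈ s, cyclotomic d ℤ ^ ν d ∣ R) :
    (∏ d ∈ s, cyclotomic d ℤ ^ ν d) ∣ R := by
  classical
  induction s using Finset.induction_on with
  | empty => simpa using one_dvd R
  | insert _ _ hnot ih =>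
    rename_i a s'
    rw [Finset.prod_insert hnot]
    obtain ⟨t, ht⟩ := ih (fun d hd => hs d (Finset.mem_insert_of_mem hd))
      (fun d hd => h d (Finset.mem_insert_of_mem hd))
    have ha0 : 0 < a := hs a (Finset.mem_insert_self a s')
    have hirr : Irreducible (cyclotomic a ℤ) := cyclotomic.irreducible ha0
    have hprime : Prime (cyclotomic a ℤ) :=
      (UniqueFactorizationMonoid.irreducible_iff_prime).mp hirr
    have hnd : ¬ cyclotomic a ℤ ∣ ∏ d ∈ s', cyclotomic d ℤ ^ ν d := by
      intro hdvd
      obtain ⟨d, hd, hdvd'⟩ := hprime.exists_mem_finset_dvd hdvd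
      have h1 : cyclotomic a ℤ ∣ cyclotomic d ℤ := hprime.dvd_of_dvd_pow hdvd'
      have hd0 : 0 < d := hs d (Finset.mem_insert_of_mem hd)
      have h2 : a = d := by
        apply cyclotomic_injective (R := ℤ)
        exact eq_of_monic_of_associated (cyclotomic.monic a ℤ) (cyclotomic.monic d ℤ)
          (hirr.associated_of_dvd (cyclotomic.irreducible hd0) h1)
      exact hnot (h2 ▸ hd)
    have h3 : cyclotomic a ℤ ^ ν a ∣ (∏ d ∈ s', cyclotomic d ℤ ^ ν d) * t := by
      rw [← ht]; exact h a (Finset.mem_insert_self a s')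
    have h4 : cyclotomic a ℤ ^ ν a ∣ t := hprime.pow_dvd_of_dvd_mul_left _ hnd h3
    obtain ⟨t', ht'⟩ := h4
    exact ⟨t', by rw [ht, ht']; ring⟩

/-- The cyclotomic factorization of `F m` (up to sign). -/
lemma F_eq (m : ℕ) :
    F m = (-1) ^ m * ∏ d ∈ Finset.Icc 1 m,
      cyclotomic d ℤ ^ ((Finset.Icc 1 m).filter (fun j => d ∣ j)).card := by
  classical
  have h1 : F m = (-1 : Polynomial ℤ) ^ m * ∏ j ∈ Finset.Icc 1 m, (X ^ j - 1) := by
    rw [F]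
    have : ∀ j ∈ Finset.Icc 1 m, (1 : Polynomial ℤ) - X ^ j = (-1) * (X ^ j - 1) :=
      fun j _ => by ring
    rw [Finset.prod_congr rfl this, Finset.prod_mul_distrib, Finset.prod_const,
      Nat.card_Icc]
    norm_num
  have h2 : ∏ j ∈ Finset.Icc 1 m, ((X : Polynomial ℤ) ^ j - 1)
      = ∏ j ∈ Finset.Icc 1 m, ∏ d ∈ j.divisors, cyclotomic d ℤ := by
    apply Finset.prod_congr rfl
    intro j hj
    have hj0 : 0 < j := by
      have := Finset.mem_Icc.mp hj; omega
    rw [prod_cyclotomic_eq_X_pow_sub_one hj0]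
  have h3 : ∏ j ∈ Finset.Icc 1 m, ∏ d ∈ j.divisors, cyclotomic d ℤ
      = ∏ d ∈ Finset.Icc 1 m, ∏ _j ∈ (Finset.Icc 1 m).filter (fun j => d ∣ j),
          cyclotomic d ℤ := by
    apply Finset.prod_comm'
    intro j d
    simp only [Finset.mem_Icc, Nat.mem_divisors, Finset.mem_filter]
    constructor
    · rintro ⟨⟨hj1, hjm⟩, hdj, hj0⟩
      have hd1 : 1 ≤ d := Nat.pos_of_dvd_of_pos hdj (by omega)
      have hdm : d ≤ m := le_trans (Nat.le_of_dvd (by omega) hdj) hjm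
      exact ⟨⟨⟨hj1, hjm⟩, hdj⟩, hd1, hdm⟩
    · rintro ⟨⟨⟨hj1, hjm⟩, hdj⟩, _, _⟩
      exact ⟨⟨hj1, hjm⟩, hdj, by omega⟩
  rw [h1, h2, h3]
  congr 1
  apply Finset.prod_congr rfl
  intro d _
  rw [Finset.prod_const]

theorem F_dvd (r : ℕ → Polynomial ℤ)
    (hcom : ∀ {m n : ℕ}, m ≤ n → F m ∣ r n - r m)
    (hdvd : ∀ n, (1 - X) ^ n ∣ r n) (m : ℕ) : F m ∣ r m := by
  classical
  set ν : ℕ → ℕ := fun d => ((Finset.Icc 1 m).filter (fun j => d ∣ j)).card with hν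
  have hkey := keyDvd r hcom hdvd
  have hprod : (∏ d ∈ Finset.Icc 1 m, cyclotomic d ℤ ^ ν d) ∣ r m := by
    apply prod_cycloPow_dvd
    · intro d hd; have := Finset.mem_Icc.mp hd; omega
    · intro d hd
      have hd0 : 0 < d := by have := Finset.mem_Icc.mp hd; omega
      apply hkey d hd0 (ν d) m
      have hcard : ν d = m / d := by
        rw [hν]
        simp only
        rw [show Finset.Icc 1 m = Finset.Ioc 0 m from Finset.Icc_add_one_left_eq_Ioc 0 m]
        exact Nat.Ioc_filter_dvd_card_eq_div m d
      rw [hcard, Nat.mul_comm]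
      exact Nat.div_mul_le_self m d
  have hF : F m ∣ ∏ d ∈ Finset.Icc 1 m, cyclotomic d ℤ ^ ν d := by
    have hsq : ((-1 : Polynomial ℤ) ^ m) * ((-1 : Polynomial ℤ) ^ m) = 1 := by
      rw [← pow_add, ← two_mul, pow_mul]; norm_num
    refine ⟨(-1) ^ m, ?_⟩
    calc (∏ d ∈ Finset.Icc 1 m, cyclotomic d ℤ ^ ν d)
        = ((-1 : Polynomial ℤ) ^ m * (-1 : Polynomial ℤ) ^ m)
            * ∏ d ∈ Finset.Icc 1 m, cyclotomic d ℤ ^ ν d := by rw [hsq, one_mul]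
      _ = ((-1) ^ m * ∏ d ∈ Finset.Icc 1 m, cyclotomic d ℤ ^ ν d) * (-1) ^ m := by ring
      _ = F m * (-1) ^ m := by rw [← F_eq m]
  exact hF.trans hprod

end HabiroAux


/-- the Taylor expansion map `T₁ : Habiro ring → ℤ[[1-q]]` at `q = 1` is
injective: an element of the Habiro ring whose image in every `ℤ[q]/(1-q)ⁿ` vanishes
(i.e. whose Taylor expansion at `1` is zero) is itself zero. -/
theorem habiro_taylor_at_one_injective (x : HabiroRing)
    (hx : ∀ n : ℕ,
      Ideal.Quotient.factor (habiroIdeal_le_pow n) ((x : ∀ n, Polynomial ℤ ⧸ habiroIdeal n) n)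
        = 0) :
    x = 0 := by
  classical
  have hsur : ∀ n, ∃ p : Polynomial ℤ, Ideal.Quotient.mk (habiroIdeal n) p
      = (x : ∀ n, Polynomial ℤ ⧸ habiroIdeal n) n :=
    fun n => Ideal.Quotient.mk_surjective _
  choose r hr using hsur
  have hx2 := x.2
  simp only [HabiroRing, Subring.mem_iInf] at hx2
  have hcom : ∀ {m n : ℕ}, m ≤ n → HabiroAux.F m ∣ r n - r m := by
    intro m n h
    have h1 : habiroTrans h ((x : ∀ k, Polynomial ℤ ⧸ habiroIdeal k) n)
        = (x : ∀ k, Polynomial ℤ ⧸ habiroIdeal k) m := hx2 m n h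
    rw [← hr n, ← hr m] at h1
    simp only [habiroTrans, Ideal.Quotient.factor_mk] at h1
    have h2 := Ideal.Quotient.eq.mp h1
    rwa [habiroIdeal, Ideal.mem_span_singleton] at h2
  have hdvd1 : ∀ n, (1 - X) ^ n ∣ r n := by
    intro n
    have h1 := hx n
    rw [← hr n] at h1
    rw [Ideal.Quotient.factor_mk] at h1
    have h2 := Ideal.Quotient.eq_zero_iff_mem.mp h1
    rwa [Ideal.mem_span_singleton] at h2
  have hFd : ∀ n, HabiroAux.F n ∣ r n :=
    HabiroAux.F_dvd r (fun {m n} h => hcom h) hdvd1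
  have hval : (x : ∀ n, Polynomial ℤ ⧸ habiroIdeal n) = 0 := by
    funext n
    rw [← hr n]
    rw [Pi.zero_apply, Ideal.Quotient.eq_zero_iff_mem, habiroIdeal,
      Ideal.mem_span_singleton]
    exact hFd n
  exact Subtype.ext hval
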